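/- Let ε > 0, let α* be the solution of exp(1/x)=x, let α = (1+ε)α* and β = 2 - α + α/(2(α²-1)). If Δ ≥ 3 and q are integers with q ≥ αΔ + β, then Φ(Δ,q) ≥ 1 + (1 + 1/α*)ε, where Φ(Δ,q) = ((q-2)/(Δ-1)) · [(1 - 1/(q-Δ+1))^{q-Δ+1}]^{(Δ-1)/(q-2)}. -/

import Mathlib

/-- log t ≤ (t²-1)/(2t) for t ≥ 1. -/
lemma aux_log_le (t : ℝ) (ht : 1 ≤ t) : Real.log t ≤ (t^2 - 1)/(2*t) := by
  have ht0 : 0 < t := lt_of_lt_of_le one_pos ht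
  have hs : 0 ≤ (t^2-1)/(2*t) := by
    apply div_nonneg (by nlinarith) (by positivity)
  have h := Real.quadratic_le_exp_of_nonneg hs
  have hkey : t ≤ Real.exp ((t^2-1)/(2*t)) := by
    refine le_trans ?_ h
    rw [div_pow, ← sub_nonneg]
    have e : 1 + (t ^ 2 - 1) / (2 * t) + (t ^ 2 - 1) ^ 2 / (2 * t) ^ 2 / 2 - t
        = (t-1)^4 / (8 * t^2) := by field_simp; ring
    rw [e]; positivity
  calc Real.log t ≤ Real.log (Real.exp ((t^2-1)/(2*t))) := Real.log_le_log ht0 hkey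
    _ = (t^2-1)/(2*t) := Real.log_exp _

/-- Φ(Δ,q) = ((q-2)/(Δ-1)) · [(1 - 1/(q-Δ+1))^{q-Δ+1}]^{(Δ-1)/(q-2)} -/
noncomputable def Phi (Δ q : ℕ) : ℝ :=
  (((q : ℝ) - 2) / ((Δ : ℝ) - 1)) *
    ((1 - 1 / ((q : ℝ) - (Δ : ℝ) + 1)) ^ ((q : ℝ) - (Δ : ℝ) + 1)) ^
      (((Δ : ℝ) - 1) / ((q : ℝ) - 2))

set_option maxHeartbeats 1000000 in
/-- For ε > 0, α = (1+ε)α*, β = 2 - α + α/(2(α²-1)): if Δ ≥ 3, q ≥ αΔ + β, then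
Φ(Δ,q) ≥ 1 + (1 + 1/α*)ε, where α* is the positive solution of exp(1/x) = x. -/
theorem stmt_5 (ε : ℝ) (hε : 0 < ε) (αstar : ℝ) (hαstar : 0 < αstar)
    (hfix : Real.exp (1 / αstar) = αstar)
    (α β : ℝ) (hα : α = (1 + ε) * αstar) (hβ : β = 2 - α + α / (2 * (α ^ 2 - 1)))
    (Δ q : ℕ) (hΔ : 3 ≤ Δ) (hq : α * (Δ : ℝ) + β ≤ (q : ℝ)) :
    1 + (1 + 1 / αstar) * ε ≤ Phi Δ q := by
  unfold Phi
  set D : ℝ := (Δ:ℝ) - 1 with hDdef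
  set Q : ℝ := (q:ℝ) - 2 with hQdef
  set m : ℝ := (q:ℝ) - (Δ:ℝ) + 1 with hmdef
  clear_value D Q m
  -- basic facts about αstar, α
  have hstar1 : 1 < αstar := by
    have h := Real.add_one_le_exp (1/αstar)
    rw [hfix] at h
    have h0 : 0 < 1/αstar := by positivity
    linarith
  have hα1 : 1 < α := by nlinarith
  have hα0 : 0 < α := by linarith
  have hα2 : 0 < α^2 - 1 := by nlinarith
  set c0 : ℝ := α / (2*(α^2-1)) with hc0def
  clear_value c0
  have hc0 : 0 < c0 := by
    rw [hc0def]; exact div_pos hα0 (by linarith)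
  have hD : (2:ℝ) ≤ D := by
    have h3 : (3:ℝ) ≤ (Δ:ℝ) := by exact_mod_cast hΔ
    rw [hDdef]; linarith
  have hD0 : (0:ℝ) < D := by linarith
  have hβ' : β = 2 - α + c0 := by rw [hβ, hc0def]
  have hQ : α*D + c0 ≤ Q := by
    rw [hβ'] at hq
    have e : α*D = α*(Δ:ℝ) - α := by rw [hDdef]; ring
    rw [hQdef]; linarith
  have hQ0 : 0 < Q := by nlinarith [mul_pos hα0 hD0]
  have hm1 : (α-1)*D + 1 + c0 ≤ m - 1 := by
    rw [hβ'] at hq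
    have e : (α-1)*D + 1 + c0 + (Δ:ℝ) = α*(Δ:ℝ) + (2 - α + c0) := by
      rw [hDdef]; ring
    rw [hmdef]; linarith
  have hm2 : (2:ℝ) < m := by nlinarith [mul_pos (by linarith : (0:ℝ) < α - 1) hD0]
  have hm10 : (1:ℝ) < m - 1 := by linarith
  have hm0 : (0:ℝ) < m := by linarith
  set δ : ℝ := 1/(2*(m-1)) with hδdef
  clear_value δ
  have hδ0 : 0 < δ := by
    rw [hδdef]; exact div_pos one_pos (by linarith)
  -- Step A : exp(-(1+δ)) ≤ (1-1/m)^m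
  have hbase : 0 < 1 - 1/m := by
    rw [sub_pos, div_lt_one hm0]; linarith
  set t : ℝ := m/(m-1) with htdef
  clear_value t
  have ht1 : 1 ≤ t := by
    rw [htdef, le_div_iff₀ (by linarith : (0:ℝ) < m - 1)]; linarith
  have hbt : 1 - 1/m = t⁻¹ := by
    rw [htdef]
    field_simp
  have hlogt : Real.log (1 - 1/m) = - Real.log t := by
    rw [hbt, Real.log_inv]
  have hmt : m * ((t^2-1)/(2*t)) = 1 + δ := by
    rw [htdef, hδdef]
    field_simp
    ring
  have hA : Real.exp (-(1+δ)) ≤ (1 - 1/m) ^ m := by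
    rw [Real.rpow_def_of_pos hbase]
    apply Real.exp_le_exp.mpr
    rw [hlogt]
    have h1 := aux_log_le t ht1
    have h2 : m * Real.log t ≤ m * ((t^2-1)/(2*t)) :=
      mul_le_mul_of_nonneg_left h1 (by linarith)
    rw [hmt] at h2
    nlinarith
  -- Step B : exp(-(1+δ))^(D/Q) ≤ ((1-1/m)^m)^(D/Q)
  have hDQ0 : 0 ≤ D/Q := le_of_lt (div_pos hD0 hQ0)
  have hB : Real.exp (-(1+δ) * (D/Q)) ≤ ((1 - 1/m) ^ m) ^ (D/Q) := by
    have h := Real.rpow_le_rpow (Real.exp_nonneg _) hA hDQ0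
    rwa [Real.rpow_def_of_pos (Real.exp_pos _), Real.log_exp] at h
  -- Step C : multiply by Q/D
  have hQDpos : 0 < Q/D := div_pos hQ0 hD0
  have hC : Q/D * Real.exp (-(1+δ) * (D/Q)) ≤ Q/D * ((1 - 1/m) ^ m) ^ (D/Q) :=
    mul_le_mul_of_nonneg_left hB (le_of_lt hQDpos)
  -- Step D : α exp(-1/α) ≤ (Q/D) exp(-(1+δ)D/Q)
  have h3 : (α-1)*D ≤ m - 1 := by linarith
  have h4 : α*δ*D ≤ (α+1)*c0 := by
    have e1 : α*δ*D = α*D/(2*(m-1)) := by rw [hδdef]; ring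
    have e2 : (α+1)*c0 = α/(2*(α-1)) := by
      rw [hc0def]
      have h1 : (2*(α^2-1)) ≠ 0 := ne_of_gt (by linarith)
      have h2 : (2*(α-1)) ≠ 0 := ne_of_gt (by linarith)
      have h2' : α - 1 ≠ 0 := ne_of_gt (by linarith)
      field_simp
      ring
    rw [e1, e2, div_le_div_iff₀ (by linarith) (by linarith)]
    calc α*D*(2*(α-1)) = 2*α*((α-1)*D) := by ring
      _ ≤ 2*α*(m-1) := mul_le_mul_of_nonneg_left h3 (by positivity)
      _ = α*(2*(m-1)) := by ring
  have hkeyD : α^2*D + α*(1+δ)*D ≤ (α+1)*Q := by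
    nlinarith [mul_le_mul_of_nonneg_left hQ (by linarith : (0:ℝ) ≤ α+1)]
  have hlogQD : 1 - α*D/Q ≤ Real.log (Q/D) - Real.log α := by
    have hx : 0 < α*D/Q := div_pos (mul_pos hα0 hD0) hQ0
    have h := Real.log_le_sub_one_of_pos hx
    have e : Real.log (α*D/Q) = Real.log α + Real.log D - Real.log Q := by
      rw [Real.log_div (by positivity) (ne_of_gt hQ0),
        Real.log_mul (ne_of_gt hα0) (ne_of_gt hD0)]
    have e2 : Real.log (Q/D) = Real.log Q - Real.log D :=
      Real.log_div (ne_of_gt hQ0) (ne_of_gt hD0)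
    rw [e] at h
    rw [e2]; linarith
  have hfrac : 0 ≤ 1 - α*D/Q - (1+δ)*(D/Q) + 1/α := by
    have e : 1 - α*D/Q - (1+δ)*(D/Q) + 1/α
        = ((α+1)*Q - (α^2*D + α*(1+δ)*D)) / (α*Q) := by
      field_simp
      ring
    rw [e]
    exact div_nonneg (by linarith) (le_of_lt (mul_pos hα0 hQ0))
  have hD1 : α * Real.exp (-(1/α)) ≤ Q/D * Real.exp (-(1+δ) * (D/Q)) := by
    rw [show α * Real.exp (-(1/α)) = Real.exp (Real.log α + -(1/α)) by
          rw [Real.exp_add, Real.exp_log hα0],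
        show Q/D * Real.exp (-(1+δ) * (D/Q)) = Real.exp (Real.log (Q/D) + -(1+δ) * (D/Q)) by
          rw [Real.exp_add, Real.exp_log hQDpos]]
    apply Real.exp_le_exp.mpr
    nlinarith [hlogQD, hfrac]
  -- Step E : 1 + (1+1/αstar)ε ≤ α exp(-1/α)
  have hstare : Real.exp (-(1/αstar)) = 1/αstar := by
    rw [Real.exp_neg, hfix, one_div]
  have hE : 1 + (1 + 1/αstar) * ε ≤ α * Real.exp (-(1/α)) := by
    have hx := Real.add_one_le_exp (1/αstar - 1/α)
    have e : Real.exp (-(1/αstar)) * Real.exp (1/αstar - 1/α) = Real.exp (-(1/α)) := by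
      rw [← Real.exp_add]
      congr 1
      ring
    rw [hstare] at e
    have h5 : (1/αstar) * (1/αstar - 1/α + 1) ≤ Real.exp (-(1/α)) := by
      rw [← e]
      exact mul_le_mul_of_nonneg_left hx (by positivity)
    have h6 : α * ((1/αstar) * (1/αstar - 1/α + 1)) ≤ α * Real.exp (-(1/α)) :=
      mul_le_mul_of_nonneg_left h5 (le_of_lt hα0)
    have heq : α * ((1/αstar) * (1/αstar - 1/α + 1)) = 1 + (1 + 1/αstar) * ε := by
      rw [hα]
      have h1 : αstar ≠ 0 := ne_of_gt hαstar
      have h2 : (1+ε) ≠ 0 := by positivity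
      field_simp
      ring
    rw [heq] at h6
    exact h6
  linarith [hE, hD1, hC]
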